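/- arXiv:1910.08151 — 2 statements merged into one kernel-verified Lean document; each statement's English description precedes it below -/
import Mathlib

section
/- For every integer t ≥ 1, the sum of squared weights satisfies ∑_{i=1}^t (α_t^i)² ≤ 2H/t. -/
/-- The learning rate `α_t = (H+1)/(H+t)`. -/
noncomputable def lrate (H t : ℕ) : ℝ := (H + 1) / (H + t)

/-- The weight `α_t^i = α_i · ∏_{j=i+1}^t (1 − α_j)`. -/
noncomputable def lrateW (H t i : ℕ) : ℝ :=
  lrate H i * ∏ j ∈ Finset.Icc (i + 1) t, (1 - lrate H j)

lemma lrate_nonneg (H t : ℕ) : 0 ≤ lrate H t := by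
  unfold lrate; positivity

lemma one_sub_lrate_nonneg (H j : ℕ) (hj : 1 ≤ j) : 0 ≤ 1 - lrate H j := by
  unfold lrate
  have h1 : (0:ℝ) < H + j := by positivity
  have : (H:ℝ) + 1 ≤ H + j := by
    have : (1:ℝ) ≤ j := by exact_mod_cast hj
    linarith
  have := div_le_one_of_le₀ this (le_of_lt h1)
  linarith

lemma prod_nonneg' (H i t : ℕ) :
    0 ≤ ∏ j ∈ Finset.Icc (i + 1) t, (1 - lrate H j) := by
  apply Finset.prod_nonneg
  intro j hj
  exact one_sub_lrate_nonneg H j (by simp at hj; omega)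

lemma lrateW_nonneg (H t i : ℕ) : 0 ≤ lrateW H t i :=
  mul_nonneg (lrate_nonneg H i) (prod_nonneg' H i t)

lemma sum_lrateW (H : ℕ) (hH : 1 ≤ H) : ∀ t, 1 ≤ t →
    ∑ i ∈ Finset.Icc 1 t, lrateW H t i = 1 := by
  intro t ht
  induction t, ht using Nat.le_induction with
  | base =>
    have h1 : lrateW H 1 1 = 1 := by
      unfold lrateW lrate
      rw [Finset.Icc_eq_empty (by omega), Finset.prod_empty, mul_one]
      push_cast
      exact div_self (by positivity)
    simp [Finset.Icc_self, h1]
  | succ t ht ih =>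
    rw [Finset.sum_Icc_succ_top (by omega)]
    have hstep : ∀ i ∈ Finset.Icc 1 t,
        lrateW H (t+1) i = lrateW H t i * (1 - lrate H (t+1)) := by
      intro i hi
      simp only [Finset.mem_Icc] at hi
      unfold lrateW
      rw [Finset.prod_Icc_succ_top (by omega)]
      ring
    rw [Finset.sum_congr rfl hstep, ← Finset.sum_mul, ih]
    have hlast : lrateW H (t+1) (t+1) = lrate H (t+1) := by
      unfold lrateW
      rw [Finset.Icc_eq_empty (by omega), Finset.prod_empty, mul_one]
    rw [hlast]
    ring

lemma prod_le (H : ℕ) (hH : 1 ≤ H) (i : ℕ) : ∀ t, i ≤ t →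
    ∏ j ∈ Finset.Icc (i + 1) t, (1 - lrate H j) ≤ ((H:ℝ) + i) / ((H:ℝ) + t) := by
  intro t hit
  induction t, hit using Nat.le_induction with
  | base =>
    rw [Finset.Icc_eq_empty (by omega), Finset.prod_empty]
    rw [div_self (by positivity)]
  | succ t hit ih =>
    rw [Finset.prod_Icc_succ_top (by omega)]
    have hb : 0 ≤ 1 - lrate H (t+1) := one_sub_lrate_nonneg H (t+1) (by omega)
    have h2 : ((H:ℝ) + i) / ((H:ℝ) + t) * (1 - lrate H (t+1))
        ≤ ((H:ℝ) + i) / ((H:ℝ) + (t+1)) := by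
      have heq : 1 - lrate H (t+1) = (t:ℝ) / ((H:ℝ) + t + 1) := by
        unfold lrate
        have : ((H:ℝ) + (t+1):ℝ) ≠ 0 := by positivity
        push_cast
        field_simp
        ring
      rw [heq, div_mul_div_comm]
      rw [div_le_div_iff₀ (by positivity) (by positivity)]
      push_cast
      have h0 : (0:ℝ) ≤ (H:ℝ) + i := by positivity
      have h1 : (1:ℝ) ≤ H := by exact_mod_cast hH
      nlinarith [mul_nonneg (mul_nonneg h0 (show (0:ℝ) ≤ (H:ℝ)+t+1 by positivity)) (show (0:ℝ) ≤ (H:ℝ) by positivity), Nat.cast_nonneg (α := ℝ) t, Nat.cast_nonneg (α := ℝ) i]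
    calc _ ≤ ((H:ℝ) + i) / ((H:ℝ) + t) * (1 - lrate H (t+1)) :=
          mul_le_mul_of_nonneg_right ih hb
      _ ≤ _ := by push_cast; push_cast at h2; linarith

lemma lrateW_le (H : ℕ) (hH : 1 ≤ H) (t i : ℕ) (hi : 1 ≤ i) (hit : i ≤ t) :
    lrateW H t i ≤ ((H:ℝ) + 1) / ((H:ℝ) + t) := by
  unfold lrateW
  have h := prod_le H hH i t hit
  calc lrate H i * ∏ j ∈ Finset.Icc (i + 1) t, (1 - lrate H j)
      ≤ lrate H i * (((H:ℝ) + i) / ((H:ℝ) + t)) :=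
        mul_le_mul_of_nonneg_left h (lrate_nonneg H i)
    _ = ((H:ℝ) + 1) / ((H:ℝ) + t) := by
        unfold lrate
        have hia : ((H:ℝ) + i) ≠ 0 := by positivity
        have hta : ((H:ℝ) + t) ≠ 0 := by positivity
        field_simp

theorem stmt_2 (H : ℕ) (hH : 1 ≤ H) (t : ℕ) (ht : 1 ≤ t) :
    ∑ i ∈ Finset.Icc 1 t, (lrateW H t i) ^ 2 ≤ 2 * H / t := by
  have hsum := sum_lrateW H hH t ht
  have step1 : ∑ i ∈ Finset.Icc 1 t, (lrateW H t i) ^ 2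
      ≤ ∑ i ∈ Finset.Icc 1 t, ((H:ℝ) + 1) / ((H:ℝ) + t) * lrateW H t i := by
    apply Finset.sum_le_sum
    intro i hi
    simp only [Finset.mem_Icc] at hi
    rw [sq]
    exact mul_le_mul_of_nonneg_right (lrateW_le H hH t i hi.1 hi.2) (lrateW_nonneg H t i)
  rw [← Finset.mul_sum, hsum, mul_one] at step1
  have step2 : ((H:ℝ) + 1) / ((H:ℝ) + t) ≤ 2 * H / t := by
    rw [div_le_div_iff₀ (by positivity) (by exact_mod_cast Nat.pos_of_ne_zero (by omega))]
    have h1 : (1:ℝ) ≤ H := by exact_mod_cast hH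
    have h2 : (1:ℝ) ≤ t := by exact_mod_cast ht
    nlinarith
  linarith
end

section
/- Let C ≥ 0 and M ≥ 0 be real numbers, define b(i) = 2√(C/i) + 4M/√i for integers i ≥ 1, and define β_t = 2·∑_{i=1}^t α_t^i · b(i). Then for every integer t ≥ 1, 4√(C/t) + 8M/√t ≤ β_t ≤ 8√(C/t) + 16M/√t. -/
lemma lrate_pos (H t : ℕ) (ht : 1 ≤ t) : 0 < lrate H t := by
  have h1 : (1:ℝ) ≤ (t:ℝ) := by exact_mod_cast ht
  have h0 : (0:ℝ) ≤ (H:ℝ) := Nat.cast_nonneg H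
  unfold lrate
  apply div_pos <;> linarith

lemma lrate_le_one (H t : ℕ) (ht : 1 ≤ t) : lrate H t ≤ 1 := by
  have h1 : (1:ℝ) ≤ (t:ℝ) := by exact_mod_cast ht
  have h0 : (0:ℝ) ≤ (H:ℝ) := Nat.cast_nonneg H
  unfold lrate
  rw [div_le_one (by linarith)]
  linarith

lemma lrateW_self (H t : ℕ) : lrateW H t t = lrate H t := by
  unfold lrateW
  rw [Finset.Icc_eq_empty (by omega), Finset.prod_empty, mul_one]

lemma lrateW_succ (H t i : ℕ) (h : i ≤ t) :
    lrateW H (t + 1) i = lrateW H t i * (1 - lrate H (t + 1)) := by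
  unfold lrateW
  rw [Finset.prod_Icc_succ_top (by omega : i + 1 ≤ t + 1)]
  ring

lemma key_bounds (H : ℕ) :
    ∀ t : ℕ, 1 ≤ t →
      1 / Real.sqrt t ≤ (∑ i ∈ Finset.Icc 1 t, lrateW H t i / Real.sqrt i) ∧
      (∑ i ∈ Finset.Icc 1 t, lrateW H t i / Real.sqrt i) ≤ 2 / Real.sqrt t := by
  intro t ht
  induction t, ht using Nat.le_induction with
  | base =>
    have h1 : lrateW H 1 1 = 1 := by
      rw [lrateW_self]
      unfold lrate
      have h0 : (0:ℝ) ≤ (H:ℝ) := Nat.cast_nonneg H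
      rw [div_eq_one_iff_eq (by push_cast; linarith)]
      push_cast; ring
    simp [h1]
  | succ t ht IH =>
    obtain ⟨IH1, IH2⟩ := IH
    set S := ∑ i ∈ Finset.Icc 1 t, lrateW H t i / Real.sqrt i with hS
    set a := lrate H (t + 1) with haa
    have h1t : (1:ℝ) ≤ (t:ℝ) := by exact_mod_cast ht
    have hHn : (0:ℝ) ≤ (H:ℝ) := Nat.cast_nonneg H
    have hx : 0 < Real.sqrt t := Real.sqrt_pos.mpr (by linarith)
    have hy : 0 < Real.sqrt ((t:ℝ) + 1) := Real.sqrt_pos.mpr (by linarith)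
    set x := Real.sqrt t with hxd
    set y := Real.sqrt ((t:ℝ) + 1) with hyd
    have hx2 : x ^ 2 = (t:ℝ) := Real.sq_sqrt (by linarith)
    have hy2 : y ^ 2 = (t:ℝ) + 1 := Real.sq_sqrt (by linarith)
    have hxy : x ≤ y := Real.sqrt_le_sqrt (by linarith)
    have ha0 : 0 < a := lrate_pos H (t + 1) (by omega)
    have ha1 : a ≤ 1 := lrate_le_one H (t + 1) (by omega)
    have hcast : Real.sqrt ((t + 1 : ℕ) : ℝ) = y := by push_cast; rfl
    have hrec : (∑ i ∈ Finset.Icc 1 (t + 1), lrateW H (t + 1) i / Real.sqrt i)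
        = (1 - a) * S + a / y := by
      rw [Finset.sum_Icc_succ_top (by omega : 1 ≤ t + 1), lrateW_self, hcast, hS,
        Finset.mul_sum]
      congr 1
      apply Finset.sum_congr rfl
      intro i hi
      have hi2 : i ≤ t := (Finset.mem_Icc.mp hi).2
      rw [lrateW_succ H t i hi2]
      ring
    rw [hcast, hrec]
    have hinv : 1 / y ≤ 1 / x := one_div_le_one_div_of_le hx hxy
    constructor
    · -- lower bound
      have h2 : (1 - a) * (1 / x) ≤ (1 - a) * S :=
        mul_le_mul_of_nonneg_left IH1 (by linarith)
      have h3 : (1 - a) * (1 / y) ≤ (1 - a) * (1 / x) :=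
        mul_le_mul_of_nonneg_left hinv (by linarith)
      have hid : (1 - a) * (1 / y) + a * (1 / y) = 1 / y := by ring
      have hay : a / y = a * (1 / y) := by ring
      linarith [hay ▸ (le_refl (a / y))]
    · -- upper bound
      have h4 : (1 - a) * S ≤ (1 - a) * (2 / x) :=
        mul_le_mul_of_nonneg_left IH2 (by linarith)
      set D : ℝ := (H:ℝ) + ((t:ℝ) + 1) with hD
      have hD0 : 0 < D := by linarith
      have ha_def : a = ((H:ℝ) + 1) / D := by
        rw [haa]; unfold lrate; push_cast; rfl
      have hDa : 1 - a = (t:ℝ) / D := by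
        rw [ha_def]
        field_simp
        ring
      have hDb : 2 - a = ((H:ℝ) + 2 * t + 1) / D := by
        rw [ha_def]
        field_simp
        ring
      have h2xy : 2 * x * y ≤ 2 * (t:ℝ) + 1 := by
        nlinarith [sq_nonneg (x - y), hx2, hy2]
      have heq : 2 * (t:ℝ) * y = x * (2 * x * y) := by
        rw [← hx2]; ring
      have hmain : 2 * (t:ℝ) * y ≤ ((H:ℝ) + 2 * t + 1) * x := by
        calc 2 * (t:ℝ) * y = x * (2 * x * y) := heq
          _ ≤ x * (2 * (t:ℝ) + 1) := mul_le_mul_of_nonneg_left h2xy hx.le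
          _ ≤ ((H:ℝ) + 2 * t + 1) * x := by nlinarith [mul_nonneg hHn hx.le]
      have hkey : (1 - a) * (2 / x) ≤ (2 - a) / y := by
        rw [show (1 - a) * (2 / x) = (2 * (1 - a)) / x by ring,
          div_le_div_iff₀ hx hy, hDa, hDb]
        rw [show 2 * ((t:ℝ) / D) * y = (2 * (t:ℝ) * y) / D by ring, div_mul_eq_mul_div]
        exact (div_le_div_iff_of_pos_right hD0).mpr hmain
      have hid2 : (2 - a) / y + a / y = 2 / y := by
        rw [← add_div]; ring_nf
      linarith

theorem stmt_8 (H : ℕ) (hH : 1 ≤ H) (C M : ℝ) (hC : 0 ≤ C) (hM : 0 ≤ M)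
    (b : ℕ → ℝ)
    (hb : ∀ i : ℕ, 1 ≤ i → b i = 2 * Real.sqrt (C / i) + 4 * M / Real.sqrt i)
    (β : ℕ → ℝ)
    (hβ : ∀ t : ℕ, β t = 2 * ∑ i ∈ Finset.Icc 1 t, lrateW H t i * b i)
    (t : ℕ) (ht : 1 ≤ t) :
    4 * Real.sqrt (C / t) + 8 * M / Real.sqrt t ≤ β t ∧
      β t ≤ 8 * Real.sqrt (C / t) + 16 * M / Real.sqrt t := by
  obtain ⟨hlo, hhi⟩ := key_bounds H t ht
  set S := ∑ i ∈ Finset.Icc 1 t, lrateW H t i / Real.sqrt i with hS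
  have hsum : ∑ i ∈ Finset.Icc 1 t, lrateW H t i * b i
      = (2 * Real.sqrt C + 4 * M) * S := by
    rw [hS, Finset.mul_sum]
    apply Finset.sum_congr rfl
    intro i hi
    have hi1 : 1 ≤ i := (Finset.mem_Icc.mp hi).1
    rw [hb i hi1, Real.sqrt_div hC]
    ring
  have hβt : β t = (4 * Real.sqrt C + 8 * M) * S := by
    rw [hβ t, hsum]; ring
  have hcpos : 0 ≤ 4 * Real.sqrt C + 8 * M := by positivity
  have hsd : Real.sqrt (C / t) = Real.sqrt C / Real.sqrt t := Real.sqrt_div hC t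
  constructor
  · have := mul_le_mul_of_nonneg_left hlo hcpos
    rw [hβt, hsd]
    calc 4 * (Real.sqrt C / Real.sqrt t) + 8 * M / Real.sqrt t
        = (4 * Real.sqrt C + 8 * M) * (1 / Real.sqrt t) := by ring
      _ ≤ (4 * Real.sqrt C + 8 * M) * S := this
  · have := mul_le_mul_of_nonneg_left hhi hcpos
    rw [hβt, hsd]
    calc (4 * Real.sqrt C + 8 * M) * S
        ≤ (4 * Real.sqrt C + 8 * M) * (2 / Real.sqrt t) := this
      _ = 8 * (Real.sqrt C / Real.sqrt t) + 16 * M / Real.sqrt t := by ring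
end
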